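/- Let u : ℝ³ → ℝ be twice continuously differentiable in (x,y,t) satisfying u_{xt} + u_x u_{yy} − u_y u_{xy} = 0 at every point, with u_x nowhere vanishing. Then the following four conservation laws hold at every point: (1) ∂_y(u_y/u_x) − ∂_t(1/u_x) = 0; (2) ∂_x(−u_y²) + ∂_y(u_x u_y) + ∂_t(u_x) = 0; (3) ∂_x(−u_t² + 2 u_t u_y² − u_y⁴) + ∂_y(−2 u_x u_y u_t + u_x u_y³) + ∂_t(u_x u_y²) = 0; (4) ∂_x(u_t u_y − u_y³) + ∂_y(−u_x u_t + u_x u_y²) + ∂_t(u_x u_y) = 0. -/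

import Mathlib

/-- Partial derivative with respect to the first variable `x`. -/
noncomputable def pdx (f : ℝ × ℝ × ℝ → ℝ) (p : ℝ × ℝ × ℝ) : ℝ :=
  deriv (fun s => f (s, p.2.1, p.2.2)) p.1

/-- Partial derivative with respect to the second variable `y`. -/
noncomputable def pdy (f : ℝ × ℝ × ℝ → ℝ) (p : ℝ × ℝ × ℝ) : ℝ :=
  deriv (fun s => f (p.1, s, p.2.2)) p.2.1

/-- Partial derivative with respect to the third variable `t`. -/
noncomputable def pdt (f : ℝ × ℝ × ℝ → ℝ) (p : ℝ × ℝ × ℝ) : ℝ :=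
  deriv (fun s => f (p.1, p.2.1, s)) p.2.2

private lemma sliceX {f : ℝ × ℝ × ℝ → ℝ} {p : ℝ × ℝ × ℝ} (hf : DifferentiableAt ℝ f p) :
    HasDerivAt (fun s => f (s, p.2.1, p.2.2)) (fderiv ℝ f p (1, 0, 0)) p.1 :=
  hf.hasFDerivAt.comp_hasDerivAt p.1
    ((hasDerivAt_id p.1).prodMk ((hasDerivAt_const _ _).prodMk (hasDerivAt_const _ _)))

private lemma sliceY {f : ℝ × ℝ × ℝ → ℝ} {p : ℝ × ℝ × ℝ} (hf : DifferentiableAt ℝ f p) :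
    HasDerivAt (fun s => f (p.1, s, p.2.2)) (fderiv ℝ f p (0, 1, 0)) p.2.1 :=
  hf.hasFDerivAt.comp_hasDerivAt p.2.1
    ((hasDerivAt_const _ _).prodMk ((hasDerivAt_id p.2.1).prodMk (hasDerivAt_const _ _)))

private lemma sliceT {f : ℝ × ℝ × ℝ → ℝ} {p : ℝ × ℝ × ℝ} (hf : DifferentiableAt ℝ f p) :
    HasDerivAt (fun s => f (p.1, p.2.1, s)) (fderiv ℝ f p (0, 0, 1)) p.2.2 :=
  hf.hasFDerivAt.comp_hasDerivAt p.2.2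
    ((hasDerivAt_const _ _).prodMk ((hasDerivAt_const _ _).prodMk (hasDerivAt_id p.2.2)))

/-- The four first-order conservation laws of the equation
`u_{xt} + u_x u_{yy} - u_y u_{xy} = 0`. -/
theorem equation5_conservation_laws
    (u : ℝ × ℝ × ℝ → ℝ) (hu : ContDiff ℝ 2 u)
    (heq : ∀ p : ℝ × ℝ × ℝ,
      pdt (pdx u) p + pdx u p * pdy (pdy u) p - pdy u p * pdy (pdx u) p = 0)
    (hx : ∀ p : ℝ × ℝ × ℝ, pdx u p ≠ 0) :
    (∀ p : ℝ × ℝ × ℝ,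
      pdy (fun q => pdy u q / pdx u q) p - pdt (fun q => 1 / pdx u q) p = 0) ∧
    (∀ p : ℝ × ℝ × ℝ,
      pdx (fun q => -(pdy u q) ^ 2) p + pdy (fun q => pdx u q * pdy u q) p
        + pdt (fun q => pdx u q) p = 0) ∧
    (∀ p : ℝ × ℝ × ℝ,
      pdx (fun q => -(pdt u q) ^ 2 + 2 * pdt u q * (pdy u q) ^ 2 - (pdy u q) ^ 4) p
        + pdy (fun q => -(2 * pdx u q * pdy u q * pdt u q) + pdx u q * (pdy u q) ^ 3) p
        + pdt (fun q => pdx u q * (pdy u q) ^ 2) p = 0) ∧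
    (∀ p : ℝ × ℝ × ℝ,
      pdx (fun q => pdt u q * pdy u q - (pdy u q) ^ 3) p
        + pdy (fun q => -(pdx u q * pdt u q) + pdx u q * (pdy u q) ^ 2) p
        + pdt (fun q => pdx u q * pdy u q) p = 0) := by
  have hu1 : ContDiff ℝ 1 u := hu.of_le (by norm_num)
  have hud : Differentiable ℝ u := hu1.differentiable one_ne_zero
  have hFc : ContDiff ℝ 1 (fderiv ℝ u) := hu.fderiv_right (by norm_num)
  have hFd : Differentiable ℝ (fderiv ℝ u) := hFc.differentiable one_ne_zero
  set D : ℝ × ℝ × ℝ → (ℝ × ℝ × ℝ) → (ℝ × ℝ × ℝ) → ℝ :=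
    fun q v w => fderiv ℝ (fderiv ℝ u) q v w with hD_def
  set a : ℝ × ℝ × ℝ → ℝ := fun q => fderiv ℝ u q (1,0,0) with ha_def
  set b : ℝ × ℝ × ℝ → ℝ := fun q => fderiv ℝ u q (0,1,0) with hb_def
  set c : ℝ × ℝ × ℝ → ℝ := fun q => fderiv ℝ u q (0,0,1) with hc_def
  -- differentiability and fderiv of the components
  have comp : ∀ v : ℝ × ℝ × ℝ, ∀ q, HasFDerivAt (fun q => fderiv ℝ u q v)
      ((ContinuousLinearMap.apply ℝ ℝ v).comp (fderiv ℝ (fderiv ℝ u) q)) q :=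
    fun v q => (ContinuousLinearMap.apply ℝ ℝ v).hasFDerivAt.comp q (hFd q).hasFDerivAt
  have had : Differentiable ℝ a := fun q => (comp (1,0,0) q).differentiableAt
  have hbd : Differentiable ℝ b := fun q => (comp (0,1,0) q).differentiableAt
  have hcd : Differentiable ℝ c := fun q => (comp (0,0,1) q).differentiableAt
  have hda : ∀ q (v : ℝ × ℝ × ℝ), fderiv ℝ a q v = D q v (1,0,0) := by
    intro q v; rw [(comp (1,0,0) q).fderiv]; rfl
  have hdb : ∀ q (v : ℝ × ℝ × ℝ), fderiv ℝ b q v = D q v (0,1,0) := by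
    intro q v; rw [(comp (0,1,0) q).fderiv]; rfl
  have hdc : ∀ q (v : ℝ × ℝ × ℝ), fderiv ℝ c q v = D q v (0,0,1) := by
    intro q v; rw [(comp (0,0,1) q).fderiv]; rfl
  -- identification of first partials
  have hpdx : pdx u = a := funext fun q => (sliceX (hud q)).deriv
  have hpdy : pdy u = b := funext fun q => (sliceY (hud q)).deriv
  have hpdt : pdt u = c := funext fun q => (sliceT (hud q)).deriv
  -- slice derivatives of a, b, c
  have hax : ∀ q : ℝ × ℝ × ℝ, HasDerivAt (fun s => a (s, q.2.1, q.2.2)) (D q (1,0,0) (1,0,0)) q.1 :=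
    fun q => by simpa only [hda] using sliceX (had q)
  have hay : ∀ q : ℝ × ℝ × ℝ, HasDerivAt (fun s => a (q.1, s, q.2.2)) (D q (0,1,0) (1,0,0)) q.2.1 :=
    fun q => by simpa only [hda] using sliceY (had q)
  have hat : ∀ q : ℝ × ℝ × ℝ, HasDerivAt (fun s => a (q.1, q.2.1, s)) (D q (0,0,1) (1,0,0)) q.2.2 :=
    fun q => by simpa only [hda] using sliceT (had q)
  have hbx : ∀ q : ℝ × ℝ × ℝ, HasDerivAt (fun s => b (s, q.2.1, q.2.2)) (D q (1,0,0) (0,1,0)) q.1 :=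
    fun q => by simpa only [hdb] using sliceX (hbd q)
  have hby : ∀ q : ℝ × ℝ × ℝ, HasDerivAt (fun s => b (q.1, s, q.2.2)) (D q (0,1,0) (0,1,0)) q.2.1 :=
    fun q => by simpa only [hdb] using sliceY (hbd q)
  have hbt : ∀ q : ℝ × ℝ × ℝ, HasDerivAt (fun s => b (q.1, q.2.1, s)) (D q (0,0,1) (0,1,0)) q.2.2 :=
    fun q => by simpa only [hdb] using sliceT (hbd q)
  have hcx : ∀ q : ℝ × ℝ × ℝ, HasDerivAt (fun s => c (s, q.2.1, q.2.2)) (D q (1,0,0) (0,0,1)) q.1 :=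
    fun q => by simpa only [hdc] using sliceX (hcd q)
  have hcy : ∀ q : ℝ × ℝ × ℝ, HasDerivAt (fun s => c (q.1, s, q.2.2)) (D q (0,1,0) (0,0,1)) q.2.1 :=
    fun q => by simpa only [hdc] using sliceY (hcd q)
  have hct : ∀ q : ℝ × ℝ × ℝ, HasDerivAt (fun s => c (q.1, q.2.1, s)) (D q (0,0,1) (0,0,1)) q.2.2 :=
    fun q => by simpa only [hdc] using sliceT (hcd q)
  -- the PDE in terms of second derivatives
  rw [hpdx, hpdy] at heq
  have heq' : ∀ q : ℝ × ℝ × ℝ,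
      D q (0,0,1) (1,0,0) + a q * D q (0,1,0) (0,1,0) - b q * D q (0,1,0) (1,0,0) = 0 := by
    intro q
    have h1 : pdt a q = D q (0,0,1) (1,0,0) := (hat q).deriv
    have h2 : pdy b q = D q (0,1,0) (0,1,0) := (hby q).deriv
    have h3 : pdy a q = D q (0,1,0) (1,0,0) := (hay q).deriv
    rw [← h1, ← h2, ← h3]; exact heq q
  -- symmetry of second derivatives
  have hsym : ∀ q (v w : ℝ × ℝ × ℝ), D q v w = D q w v := fun q v w =>
    second_derivative_symmetric (fun y => (hud y).hasFDerivAt) ((hFd q).hasFDerivAt) v w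
  have hx' : ∀ q, a q ≠ 0 := by simpa only [hpdx] using hx
  simp only [hpdx, hpdy, hpdt]
  refine ⟨fun p => ?_, fun p => ?_, fun p => ?_, fun p => ?_⟩
  · -- law 1
    have h1 := ((hby p).div (hay p) (hx' p)).deriv
    have h2 := ((hasDerivAt_const p.2.2 (1:ℝ)).div (hat p) (hx' p)).deriv
    simp only [pdy, pdt]
    simp only [Pi.div_def, Pi.mul_def, Pi.pow_def, Pi.neg_def, Pi.add_def, Pi.sub_def] at h1 h2
    rw [h1, h2, div_sub_div_same, div_eq_zero_iff]
    exact Or.inl (by linear_combination heq' p)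
  · -- law 2
    have h1 := (((hbx p).pow 2).neg).deriv
    have h2 := ((hay p).mul (hby p)).deriv
    have h3 := (hat p).deriv
    simp only [pdx, pdy, pdt]
    simp only [Pi.div_def, Pi.mul_def, Pi.pow_def, Pi.neg_def, Pi.add_def, Pi.sub_def] at h1 h2 h3
    rw [h1, h2, h3]
    linear_combination heq' p - 2 * b p * hsym p (1,0,0) (0,1,0)
  · -- law 3
    have h1 := ((((hcx p).pow 2).neg.add (((hcx p).const_mul 2).mul ((hbx p).pow 2))).sub
      ((hbx p).pow 4)).deriv
    have h2 := (((((hay p).const_mul 2).mul (hby p)).mul (hcy p)).neg.add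
      ((hay p).mul ((hby p).pow 3))).deriv
    have h3 := ((hat p).mul ((hbt p).pow 2)).deriv
    simp only [pdx, pdy, pdt]
    simp only [Pi.div_def, Pi.mul_def, Pi.pow_def, Pi.neg_def, Pi.add_def, Pi.sub_def] at h1 h2 h3
    rw [h1, h2, h3]
    linear_combination (3 * b p ^ 2 - 2 * c p) * heq' p
      + (2 * b p ^ 2 - 2 * c p) * hsym p (1,0,0) (0,0,1)
      + (4 * c p * b p - 4 * b p ^ 3) * hsym p (1,0,0) (0,1,0)
      + (-2 * a p * b p) * hsym p (0,1,0) (0,0,1)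
  · -- law 4
    have h1 := (((hcx p).mul (hbx p)).sub ((hbx p).pow 3)).deriv
    have h2 := (((hay p).mul (hcy p)).neg.add ((hay p).mul ((hby p).pow 2))).deriv
    have h3 := ((hat p).mul ((hbt p).pow 2)).deriv
    simp only [pdx, pdy, pdt]
    simp only [Pi.div_def, Pi.mul_def, Pi.pow_def, Pi.neg_def, Pi.add_def, Pi.sub_def] at h1 h2
    rw [h1, h2]
    have h4 := ((hat p).mul (hbt p)).deriv
    simp only [Pi.div_def, Pi.mul_def, Pi.pow_def, Pi.neg_def, Pi.add_def, Pi.sub_def] at h4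
    rw [h4]
    linear_combination (2 * b p) * heq' p
      + b p * hsym p (1,0,0) (0,0,1)
      + (c p - 3 * b p ^ 2) * hsym p (1,0,0) (0,1,0)
      + (- a p) * hsym p (0,1,0) (0,0,1)
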